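/- Let J ⊆ {1,...,n} and let x̄(J) = (x̄_j)_{j∈J} be a J-circuit, meaning an injective assignment of values in {v_1,...,v_n} to the indices in J that contains no cycle (there is no sequence j_1,...,j_k of distinct indices in J with x̄_{j_t} = v_{j_{t+1}} for t < k and x̄_{j_k} = v_{j_1}). Then there exists a full circuit x (a single n-cycle on {v_1,...,v_n}) with x_j = x̄_j for all j ∈ J. -/

import Mathlib

/-- A circuit on `{1,...,n}`: a permutation of `Fin n` that is a single `n`-cycle. -/
def IsCircuitPerm {n : ℕ} (σ : Equiv.Perm (Fin n)) : Prop :=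
  σ.IsCycle ∧ σ.support = Finset.univ

/-- The partial assignment `j ↦ f j` (for `j ∈ J`) creates no cycle: there is no
`j ∈ J` and `k ≥ 1` such that the iterates of `f` starting at `j` stay in `J`
and return to `j` after `k` steps. -/
def NoCycleOn {n : ℕ} (f : Fin n → Fin n) (J : Finset (Fin n)) : Prop :=
  ¬ ∃ j ∈ J, ∃ k, 0 < k ∧ (∀ t < k, f^[t] j ∈ J) ∧ f^[k] j = j

/-- Chain exit lemma: from any start, iterates of an injective acyclic partial map
eventually leave `J`. -/
lemma exists_exit {n : ℕ} {f : Fin n → Fin n} {J : Finset (Fin n)}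
    (hinj : Set.InjOn f J) (hnc : NoCycleOn f J) (k₀ : Fin n) :
    ∃ m, f^[m] k₀ ∉ J ∧ ∀ t < m, f^[t] k₀ ∈ J := by
  by_contra h
  push_neg at h
  have hall : ∀ m, f^[m] k₀ ∈ J := by
    intro m
    induction m using Nat.strong_induction_on with
    | _ m ih =>
      by_contra hm
      obtain ⟨t, ht, ht'⟩ := h m hm
      exact ht' (ih t ht)
  -- pigeonhole
  have hmap : ∀ t ∈ Finset.range (J.card + 1), f^[t] k₀ ∈ J := fun t _ => hall t
  obtain ⟨s, hs, t, ht, hne, heq⟩ :=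
    Finset.exists_ne_map_eq_of_card_lt_of_maps_to (by simp) hmap
  wlog hlt : s < t generalizing s t
  · exact this t ht s hs hne.symm heq.symm (by omega)
  -- cancellation
  have canc : ∀ s t, f^[s] k₀ = f^[s + t] k₀ → k₀ = f^[t] k₀ := by
    intro s
    induction s with
    | zero => intro t h; simpa using h
    | succ s ih =>
      intro t h
      apply ih
      have h1 : f (f^[s] k₀) = f (f^[s + t] k₀) := by
        rw [show f (f^[s] k₀) = f^[s+1] k₀ from (Function.iterate_succ_apply' f s k₀).symm,
          show f (f^[s + t] k₀) = f^[s+t+1] k₀ from (Function.iterate_succ_apply' f (s+t) k₀).symm]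
        rw [show s + t + 1 = s + 1 + t by omega]
        exact h
      exact hinj (hall s) (hall (s + t)) h1
  have hcyc : k₀ = f^[t - s] k₀ := canc s (t - s) (by rw [Nat.add_sub_cancel' hlt.le]; exact heq)
  exact hnc ⟨k₀, hall 0, t - s, by omega, fun u _ => hall u, hcyc.symm⟩

/-- Periodicity of iterates. -/
lemma iterate_mod {α : Type*} {g : α → α} {j : α} {k : ℕ} (hk : 0 < k) (h : g^[k] j = j) :
    ∀ u, g^[u] j = g^[u % k] j := by
  have hmul : ∀ a, g^[k * a] j = j := by
    intro a
    induction a with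
    | zero => simp
    | succ a ih => rw [Nat.mul_succ, Function.iterate_add_apply, h, ih]
  intro u
  conv_lhs => rw [← Nat.mod_add_div u k, Function.iterate_add_apply, hmul]

/-- Extending an acyclic partial injection by `j₀ ↦ k₀` stays acyclic, provided
`k₀` is not in the image and `j₀` differs from the exit point of the chain from `k₀`. -/
lemma extend_nc {n : ℕ} {f : Fin n → Fin n} {J : Finset (Fin n)}
    (hnc : NoCycleOn f J) {j₀ k₀ : Fin n} {m : ℕ}
    (hj₀ : j₀ ∉ J)
    (he : f^[m] k₀ ∉ J) (hchain : ∀ t < m, f^[t] k₀ ∈ J)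
    (hje : j₀ ≠ f^[m] k₀) :
    NoCycleOn (Function.update f j₀ k₀) (insert j₀ J) := by
  set g := Function.update f j₀ k₀ with hg
  have hgJ : ∀ x, x ≠ j₀ → g x = f x := fun x hx => Function.update_of_ne hx _ _
  rintro ⟨j, hj, k, hk, hmem, hret⟩
  by_cases hB : ∃ s < k, g^[s] j = j₀
  · obtain ⟨s, hs, hsj⟩ := hB
    -- rotate the cycle to be based at j₀
    have hretj : g^[k] j₀ = j₀ := by
      rw [← hsj, ← Function.iterate_add_apply, Nat.add_comm, Function.iterate_add_apply, hret]
    have hmemj : ∀ t < k, g^[t] j₀ ∈ insert j₀ J := by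
      intro t ht
      have h1 : g^[t] j₀ = g^[(t + s) % k] j := by
        rw [← hsj, ← Function.iterate_add_apply]
        exact iterate_mod hk hret (t + s)
      rw [h1]
      exact hmem _ (Nat.mod_lt _ hk)
    -- pass to the minimal cycle length at j₀
    have hP : ∃ k, 0 < k ∧ (∀ t < k, g^[t] j₀ ∈ insert j₀ J) ∧ g^[k] j₀ = j₀ :=
      ⟨k, hk, hmemj, hretj⟩
    classical
    obtain ⟨hk'0, hmem', hret'⟩ := Nat.find_spec hP
    set k' := Nat.find hP with hk'def
    have hmin : ∀ t, 0 < t → t < k' → g^[t] j₀ ≠ j₀ := by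
      intro t ht0 htk habs
      exact Nat.find_min hP htk ⟨ht0, fun u hu => hmem' u (hu.trans htk), habs⟩
    have hk₀j₀ : k₀ ≠ j₀ := by
      rcases Nat.eq_zero_or_pos m with hm | hm
      · intro h; apply hje; rw [hm]; simpa using h.symm
      · intro h; exact hj₀ (h ▸ hchain 0 hm)
    have hgj₀ : g j₀ = k₀ := Function.update_self _ _ _
    have hk'2 : 2 ≤ k' := by
      by_contra h
      have hk1 : k' = 1 := by omega
      rw [hk1] at hret'
      simp only [Function.iterate_one] at hret'
      rw [hgj₀] at hret'
      exact hk₀j₀ hret'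
    obtain ⟨u₀, hu₀⟩ : ∃ u₀, k' = u₀ + 2 := ⟨k' - 2, by omega⟩
    -- the cycle through j₀ follows the chain from k₀
    have hC : ∀ u, u < k' - 1 → g^[u + 1] j₀ = f^[u] k₀ ∧ f^[u] k₀ ∈ J := by
      intro u hu
      induction u with
      | zero =>
        refine ⟨by simpa using hgj₀, ?_⟩
        have h1 : g^[1] j₀ ∈ insert j₀ J := hmem' 1 (by omega)
        have h2 : g^[1] j₀ ≠ j₀ := hmin 1 (by omega) (by omega)
        simp only [Function.iterate_one, hgj₀] at h1 h2
        rcases Finset.mem_insert.mp h1 with h | h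
        · exact absurd h h2
        · exact h
      | succ u ih =>
        obtain ⟨ih1, ih2⟩ := ih (by omega)
        have h1 : g^[u + 2] j₀ = f^[u + 1] k₀ := by
          rw [show u + 2 = (u + 1) + 1 from rfl, Function.iterate_succ_apply', ih1,
            hgJ _ (fun h => hj₀ (h ▸ ih2))]
          exact (Function.iterate_succ_apply' f u k₀).symm
        refine ⟨h1, ?_⟩
        have h2 : g^[u + 2] j₀ ∈ insert j₀ J := hmem' _ (by omega)
        have h3 : g^[u + 2] j₀ ≠ j₀ := hmin _ (by omega) (by omega)
        rw [h1] at h2 h3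
        rcases Finset.mem_insert.mp h2 with h | h
        · exact absurd h h3
        · exact h
    -- so f^[u₀+1] k₀ = j₀ is the first exit, hence m = u₀+1, contradicting hje
    obtain ⟨h1, h2⟩ := hC u₀ (by omega)
    have h3 : g^[u₀ + 2] j₀ = f^[u₀ + 1] k₀ := by
      rw [show u₀ + 2 = (u₀ + 1) + 1 from rfl, Function.iterate_succ_apply', h1,
        hgJ _ (fun h => hj₀ (h ▸ h2))]
      exact (Function.iterate_succ_apply' f u₀ k₀).symm
    have hfinal : f^[u₀ + 1] k₀ = j₀ := by rw [← h3, ← hu₀, hret']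
    rcases lt_trichotomy m (u₀ + 1) with h | h | h
    · exact he ((hC m (by omega)).2)
    · exact hje (h ▸ hfinal.symm)
    · exact hj₀ (hfinal ▸ hchain (u₀ + 1) h)
  · -- cycle avoiding j₀: a cycle of f inside J
    push_neg at hB
    have hjJ : j ∈ J := by
      rcases Finset.mem_insert.mp hj with h | h
      · exact absurd (by simpa using h) (hB 0 hk)
      · exact h
    have hfg : ∀ t, t ≤ k → g^[t] j = f^[t] j ∧ (t < k → f^[t] j ∈ J) := by
      intro t ht
      induction t with
      | zero => exact ⟨rfl, fun _ => hjJ⟩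
      | succ t ih =>
        obtain ⟨ih1, ih2⟩ := ih (by omega)
        have htJ : f^[t] j ∈ J := by
          have h1 : g^[t] j ∈ insert j₀ J := hmem t (by omega)
          have h2 : g^[t] j ≠ j₀ := hB t (by omega)
          rw [ih1] at h1 h2
          rcases Finset.mem_insert.mp h1 with h | h
          · exact absurd h h2
          · exact h
        have h1 : g^[t + 1] j = f^[t + 1] j := by
          rw [Function.iterate_succ_apply', ih1, hgJ _ (fun h => hj₀ (h ▸ htJ))]
          exact (Function.iterate_succ_apply' f t j).symm
        refine ⟨h1, fun hlt => ?_⟩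
        have h2 : g^[t + 1] j ∈ insert j₀ J := hmem _ hlt
        have h3 : g^[t + 1] j ≠ j₀ := hB _ hlt
        rw [h1] at h2 h3
        rcases Finset.mem_insert.mp h2 with h | h
        · exact absurd h h3
        · exact h
    exact hnc ⟨j, hjJ, k, hk, fun t ht => (hfg t ht.le).2 ht, by
      rw [← (hfg k le_rfl).1]; exact hret⟩

/-- A global injection whose restriction to the complement of one point is acyclic
is a single `n`-cycle. -/
lemma full_circuit {n : ℕ} (hn : 2 ≤ n) (g : Fin n → Fin n) (hinj : Function.Injective g)
    (j₀ : Fin n) (hnc : NoCycleOn g (Finset.univ.erase j₀)) :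
    ∃ σ : Equiv.Perm (Fin n), IsCircuitPerm σ ∧ ∀ x, σ x = g x := by
  have hbij : Function.Bijective g := Finite.injective_iff_bijective.mp hinj
  set σ := Equiv.ofBijective g hbij with hσ
  have hσg : ∀ x, σ x = g x := fun _ => rfl
  have hσit : ∀ t x, σ^[t] x = g^[t] x := fun t x => rfl
  -- every point is periodic
  have hper : ∀ x : Fin n, ∃ k, 0 < k ∧ g^[k] x = x := by
    intro x
    have hmap : ∀ t ∈ Finset.range (n + 1), g^[t] x ∈ (Finset.univ : Finset (Fin n)) :=
      fun t _ => Finset.mem_univ _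
    obtain ⟨s, hs, t, ht, hne, heq⟩ :=
      Finset.exists_ne_map_eq_of_card_lt_of_maps_to (by simp) hmap
    wlog hlt : s < t generalizing s t
    · exact this t ht s hs hne.symm heq.symm (by omega)
    refine ⟨t - s, by omega, ?_⟩
    have h1 : g^[s] (g^[t - s] x) = g^[s] x := by
      rw [← Function.iterate_add_apply, Nat.add_sub_cancel' hlt.le]
      exact heq.symm
    exact (hinj.iterate s) h1
  -- every point reaches j₀
  have horbit : ∀ x : Fin n, ∃ t, g^[t] x = j₀ := by
    intro x
    by_contra h
    push_neg at h
    obtain ⟨k, hk, hret⟩ := hper x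
    refine hnc ⟨x, ?_, k, hk, fun t _ => ?_, hret⟩
    · exact Finset.mem_erase.mpr ⟨by simpa using h 0, Finset.mem_univ _⟩
    · exact Finset.mem_erase.mpr ⟨h t, Finset.mem_univ _⟩
  -- j₀ is not fixed
  have hne : g j₀ ≠ j₀ := by
    intro hfix
    obtain ⟨x, hx⟩ := Fintype.exists_ne_of_one_lt_card (by simpa using (show 1 < n by omega)) j₀
    obtain ⟨t, ht⟩ := horbit x
    have key : ∀ t (y : Fin n), g^[t] y = j₀ → y = j₀ := by
      intro t
      induction t with
      | zero => intro y h; simpa using h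
      | succ t ih =>
        intro y h
        rw [Function.iterate_succ_apply'] at h
        exact ih y (hinj (h.trans hfix.symm))
    exact hx (key t x ht)
  refine ⟨σ, ⟨⟨j₀, by simpa [hσg] using hne, ?_⟩, ?_⟩, hσg⟩
  · intro y _
    obtain ⟨t, ht⟩ := horbit y
    have : (σ ^ t) y = j₀ := ht
    exact (Equiv.Perm.SameCycle.symm ⟨(t : ℤ), by rwa [zpow_natCast]⟩)
  · refine Finset.eq_univ_iff_forall.mpr fun y => Equiv.Perm.mem_support.mpr fun hfix => ?_
    have hfix' : g y = y := hfix
    have hall : ∀ t, g^[t] y = y := by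
      intro t
      induction t with
      | zero => rfl
      | succ t ih => rw [Function.iterate_succ_apply', ih, hfix']
    obtain ⟨t, ht⟩ := horbit y
    rw [hall t] at ht
    rw [ht] at hfix'
    exact hne hfix'

lemma nc_congr {n : ℕ} {f g : Fin n → Fin n} {J : Finset (Fin n)}
    (h : ∀ x ∈ J, g x = f x) (hnc : NoCycleOn f J) : NoCycleOn g J := by
  rintro ⟨j, hj, k, hk, hmem, hret⟩
  have claim : ∀ t, t ≤ k → g^[t] j = f^[t] j := by
    intro t ht
    induction t with
    | zero => rfl
    | succ t ih =>
      have ih1 := ih (by omega)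
      have hmemt : g^[t] j ∈ J := hmem t (by omega)
      rw [Function.iterate_succ_apply', ih1, h _ (ih1 ▸ hmemt)]
      exact (Function.iterate_succ_apply' f t j).symm
  refine hnc ⟨j, hj, k, hk, fun t ht => claim t ht.le ▸ hmem t ht, claim k le_rfl ▸ hret⟩

lemma main_ind {n : ℕ} (hn : 2 ≤ n) :
    ∀ m (J : Finset (Fin n)) (f : Fin n → Fin n), Jᶜ.card ≤ m → Set.InjOn f J →
      NoCycleOn f J →
      ∃ σ : Equiv.Perm (Fin n), IsCircuitPerm σ ∧ ∀ j ∈ J, σ j = f j := by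
  intro m
  induction m with
  | zero =>
    intro J f hcard hinj hnc
    exfalso
    have hJ : J = Finset.univ := by
      have h1 : J.card ≤ n := by simpa using Finset.card_le_univ (s := J)
      have h2 := Finset.card_compl J (α := Fin n)
      simp only [Fintype.card_fin] at h2
      have : J.card = n := by omega
      exact Finset.eq_univ_of_card _ (by simpa using this)
    obtain ⟨m₀, he, _⟩ := exists_exit hinj hnc ⟨0, by omega⟩
    rw [hJ] at he
    exact he (Finset.mem_univ _)
  | succ m ih =>
    intro J f hcard hinj hnc
    rcases Nat.lt_or_ge Jᶜ.card (m + 1) with h | h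
    · exact ih J f (by omega) hinj hnc
    have hcard' : Jᶜ.card = m + 1 := by omega
    have hcompl := Finset.card_compl J (α := Fin n)
    simp only [Fintype.card_fin] at hcompl
    have hJn : J.card < n := by omega
    -- choose k₀ outside the image of f on J
    obtain ⟨k₀, hk₀⟩ : ∃ k₀, k₀ ∉ J.image f := by
      by_contra hc
      push_neg at hc
      have : (J.image f) = Finset.univ := Finset.eq_univ_iff_forall.mpr hc
      have h1 := Finset.card_image_le (s := J) (f := f)
      rw [this] at h1
      simp at h1
      omega
    obtain ⟨m₀, he, hchain⟩ := exists_exit hinj hnc k₀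
    rcases Nat.lt_or_ge Jᶜ.card 2 with h2 | h2
    · -- last step: Jᶜ = {j₀}
      have hc1 : Jᶜ.card = 1 := by omega
      obtain ⟨j₀, hj₀⟩ := Finset.card_eq_one.mp hc1
      have hj₀J : j₀ ∉ J := by
        have : j₀ ∈ Jᶜ := hj₀ ▸ Finset.mem_singleton_self j₀
        simpa using this
      have hmemJ : ∀ x : Fin n, x ≠ j₀ → x ∈ J := by
        intro x hx
        by_contra hxJ
        have : x ∈ Jᶜ := Finset.mem_compl.mpr hxJ
        rw [hj₀] at this
        exact hx (Finset.mem_singleton.mp this)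
      set g := Function.update f j₀ k₀ with hg
      have hgJ : ∀ x, x ≠ j₀ → g x = f x := fun x hx => Function.update_of_ne hx _ _
      have hgj₀ : g j₀ = k₀ := Function.update_self _ _ _
      have hginj : Function.Injective g := by
        intro a b hab
        by_cases ha : a = j₀ <;> by_cases hb : b = j₀
        · rw [ha, hb]
        · exfalso
          rw [ha, hgj₀, hgJ b hb] at hab
          exact hk₀ (Finset.mem_image.mpr ⟨b, hmemJ b hb, hab.symm⟩)
        · exfalso
          rw [hb, hgj₀, hgJ a ha] at hab
          exact hk₀ (Finset.mem_image.mpr ⟨a, hmemJ a ha, hab⟩)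
        · rw [hgJ a ha, hgJ b hb] at hab
          exact hinj (hmemJ a ha) (hmemJ b hb) hab
      have hJeq : Finset.univ.erase j₀ = J := by
        ext x
        simp only [Finset.mem_erase, Finset.mem_univ, and_true]
        exact ⟨fun hx => hmemJ x hx, fun hx => fun hc => hj₀J (hc ▸ hx)⟩
      have hncg : NoCycleOn g (Finset.univ.erase j₀) := by
        rw [hJeq]
        exact nc_congr (fun x hx => hgJ x (fun hc => hj₀J (hc ▸ hx))) hnc
      obtain ⟨σ, hcirc, hσ⟩ := full_circuit hn g hginj j₀ hncg
      exact ⟨σ, hcirc, fun j hj => by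
        rw [hσ j, hgJ j (fun hc => hj₀J (hc ▸ hj))]⟩
    · -- extension step
      obtain ⟨j₀, hj₀⟩ : ∃ j₀, j₀ ∈ Jᶜ.erase (f^[m₀] k₀) := by
        apply Finset.card_pos.mp
        have := Finset.pred_card_le_card_erase (s := Jᶜ) (a := f^[m₀] k₀)
        omega
      obtain ⟨hje, hj₀c⟩ := Finset.mem_erase.mp hj₀
      have hj₀J : j₀ ∉ J := Finset.mem_compl.mp hj₀c
      set g := Function.update f j₀ k₀ with hg
      have hgJ : ∀ x, x ≠ j₀ → g x = f x := fun x hx => Function.update_of_ne hx _ _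
      have hgj₀ : g j₀ = k₀ := Function.update_self _ _ _
      have hginj : Set.InjOn g ((insert j₀ J : Finset (Fin n)) : Set (Fin n)) := by
        intro a ha b hb hab
        simp only [Finset.coe_insert, Set.mem_insert_iff, Finset.mem_coe] at ha hb
        rcases ha with ha | ha <;> rcases hb with hb | hb
        · rw [ha, hb]
        · exfalso
          rw [ha, hgj₀, hgJ b (fun hc => hj₀J (hc ▸ hb))] at hab
          exact hk₀ (Finset.mem_image.mpr ⟨b, hb, hab.symm⟩)
        · exfalso
          rw [hb, hgj₀, hgJ a (fun hc => hj₀J (hc ▸ ha))] at hab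
          exact hk₀ (Finset.mem_image.mpr ⟨a, ha, hab⟩)
        · rw [hgJ a (fun hc => hj₀J (hc ▸ ha)), hgJ b (fun hc => hj₀J (hc ▸ hb))] at hab
          exact hinj ha hb hab
      have hncg : NoCycleOn g (insert j₀ J) :=
        extend_nc hnc hj₀J he hchain hje
      have hcard'' : (insert j₀ J)ᶜ.card ≤ m := by
        have h1 : (insert j₀ J).card = J.card + 1 := Finset.card_insert_of_notMem hj₀J
        have h2 := Finset.card_compl (insert j₀ J) (α := Fin n)
        simp only [Fintype.card_fin] at h2
        omega
      obtain ⟨σ, hcirc, hσ⟩ := ih (insert j₀ J) g hcard'' hginj hncg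
      exact ⟨σ, hcirc, fun j hj => by
        rw [hσ j (Finset.mem_insert_of_mem hj), hgJ j (fun hc => hj₀J (hc ▸ hj))]⟩

/-- Every `J`-circuit (an injective, cycle-free partial assignment on `J`, sending
index `j` to the index of its value `v_{f j}`) extends to a full circuit `σ`. -/
theorem stmt_4 (n : ℕ) (hn : 2 ≤ n) (v : Fin n → ℝ) (hv : StrictMono v)
    (J : Finset (Fin n)) (f : Fin n → Fin n)
    (hinj : Set.InjOn f J) (hnc : NoCycleOn f J) :
    ∃ σ : Equiv.Perm (Fin n), IsCircuitPerm σ ∧ ∀ j ∈ J, v (σ j) = v (f j) := by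
  obtain ⟨σ, hcirc, hσ⟩ := main_ind hn Jᶜ.card J f le_rfl hinj hnc
  exact ⟨σ, hcirc, fun j hj => by rw [hσ j hj]⟩
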